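/- Let Ω ⊂ ℝⁿ be a convex body, let (p_k)_{k∈ℕ} be a sequence in [1,∞) with p_k → ∞, and let (ω_k)_{k∈ℕ} be nonempty compact convex subsets of Ω converging, with respect to the Hausdorff distance, to a nonempty compact convex set ω ⊆ Ω. Then J_{p_k}(ω_k) → d^H(ω,Ω) as k → ∞. -/

import Mathlib

open MeasureTheory Metric Filter Topology
open scoped ENNReal NNReal Pointwise

/-- Support function of a set `ω`, as a function of the direction `θ`. -/
noncomputable def suppFn {n : ℕ} (ω : Set (EuclideanSpace ℝ (Fin n)))
    (θ : EuclideanSpace ℝ (Fin n)) : ℝ :=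
  sSup ((fun y => (inner ℝ θ y : ℝ)) '' ω)

/-- The p-distance functional `J_p`. -/
noncomputable def Jp {n : ℕ} (Ω ω : Set (EuclideanSpace ℝ (Fin n))) (p : ℝ) : ℝ :=
  (∫ θ in sphere (0 : EuclideanSpace ℝ (Fin n)) 1,
      |suppFn Ω θ - suppFn ω θ| ^ p ∂(μH[(n : ℝ) - 1])) ^ (1 / p)

/-- The admissible class: nonempty compact convex subsets of `Ω` of volume `c`. -/
def Kc {n : ℕ} (Ω : Set (EuclideanSpace ℝ (Fin n))) (c : ℝ≥0∞) :
    Set (Set (EuclideanSpace ℝ (Fin n))) :=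
  {ω | ω.Nonempty ∧ IsCompact ω ∧ Convex ℝ ω ∧ ω ⊆ Ω ∧ volume ω = c}

section SuppFn
variable {n : ℕ}
local notation "E" => EuclideanSpace ℝ (Fin n)

lemma suppFn_bddAbove {ω : Set E} (hc : IsCompact ω) (θ : E) :
    BddAbove ((fun y => (inner ℝ θ y : ℝ)) '' ω) :=
  (hc.image (continuous_const.inner continuous_id)).bddAbove

lemma inner_le_suppFn {ω : Set E} (hc : IsCompact ω) {y : E} (hy : y ∈ ω) (θ : E) :
    (inner ℝ θ y : ℝ) ≤ suppFn ω θ :=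
  le_csSup (suppFn_bddAbove hc θ) ⟨y, hy, rfl⟩

lemma suppFn_le {ω : Set E} (hne : ω.Nonempty) {θ : E} {c : ℝ}
    (h : ∀ y ∈ ω, (inner ℝ θ y : ℝ) ≤ c) : suppFn ω θ ≤ c :=
  csSup_le (hne.image _) (by rintro _ ⟨z, hz, rfl⟩; exact h z hz)

lemma exists_suppFn_eq {ω : Set E} (hne : ω.Nonempty) (hc : IsCompact ω) (θ : E) :
    ∃ y ∈ ω, suppFn ω θ = (inner ℝ θ y : ℝ) := by
  obtain ⟨y, hy, hmax⟩ := hc.exists_isMaxOn hne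
    ((Continuous.inner continuous_const continuous_id :
      Continuous fun y : E => (inner ℝ θ y : ℝ)).continuousOn)
  exact ⟨y, hy, le_antisymm (suppFn_le hne fun z hz => hmax hz)
    (le_csSup (suppFn_bddAbove hc θ) ⟨y, hy, rfl⟩)⟩

lemma suppFn_mono {ω Ω : Set E} (hne : ω.Nonempty) (hsub : ω ⊆ Ω) (hΩ : IsCompact Ω) (θ : E) :
    suppFn ω θ ≤ suppFn Ω θ :=
  suppFn_le hne fun y hy => inner_le_suppFn hΩ (hsub hy) θ

lemma suppFn_le_add_hausdorffDist {A B : Set E} (hAne : A.Nonempty) (hA : IsCompact A)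
    (hBne : B.Nonempty) (hB : IsCompact B) {θ : E} (hθ : ‖θ‖ = 1) :
    suppFn A θ ≤ suppFn B θ + hausdorffDist A B := by
  obtain ⟨y, hy, hEq⟩ := exists_suppFn_eq hAne hA θ
  rw [hEq]
  have hfin : EMetric.hausdorffEdist A B ≠ ⊤ :=
    hausdorffEdist_ne_top_of_nonempty_of_bounded hAne hBne hA.isBounded hB.isBounded
  refine le_of_forall_pos_le_add fun ε hε => ?_
  have h2 : infDist y B < hausdorffDist A B + ε :=
    lt_of_le_of_lt (infDist_le_hausdorffDist_of_mem hy hfin) (by linarith)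
  obtain ⟨z, hz, hdz⟩ := (infDist_lt_iff hBne).mp h2
  have h3 : (inner ℝ θ y : ℝ) = inner ℝ θ z + inner ℝ θ (y - z) := by
    rw [inner_sub_right]; ring
  have h4 : (inner ℝ θ (y - z) : ℝ) ≤ ‖θ‖ * ‖y - z‖ := real_inner_le_norm _ _
  have h5 : ‖y - z‖ < hausdorffDist A B + ε := by rw [← dist_eq_norm]; exact hdz
  have h6 := inner_le_suppFn hB hz θ
  rw [hθ, one_mul] at h4
  linarith

lemma exists_theta_gt {Ω ω : Set E} (hΩc : IsCompact Ω)
    (hωne : ω.Nonempty) (hωc : IsCompact ω) (hωconv : Convex ℝ ω) (hsub : ω ⊆ Ω)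
    {r : ℝ} (hr : r < hausdorffDist ω Ω) (hn : 0 < n) :
    ∃ θ ∈ sphere (0:E) 1, r < suppFn Ω θ - suppFn ω θ := by
  have hθ₁ : (EuclideanSpace.single (⟨0, hn⟩ : Fin n) (1:ℝ)) ∈ sphere (0:E) 1 := by
    simp [EuclideanSpace.norm_single]
  by_cases hr0 : r < 0
  · refine ⟨_, hθ₁, lt_of_lt_of_le hr0 (sub_nonneg.2 (suppFn_mono hωne hsub hΩc _))⟩
  push_neg at hr0
  have hx : ∃ x ∈ Ω, r < infDist x ω := by
    by_contra H
    push_neg at H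
    refine absurd (hausdorffDist_le_of_infDist hr0 (fun x hx => ?_) H) (not_le.2 hr)
    rw [infDist_zero_of_mem (hsub hx)]; exact hr0
  obtain ⟨x, hxΩ, hxd⟩ := hx
  obtain ⟨z, hz, hzd⟩ := hωc.exists_infDist_eq_dist hωne x
  set R := dist x z with hRdef
  have hRpos : 0 < R := lt_of_le_of_lt hr0 (hzd ▸ hxd)
  have hnorm : ‖x - z‖ = R := by rw [← dist_eq_norm]
  have hmin : ‖x - z‖ = ⨅ w : ω, ‖x - w‖ := by
    rw [← dist_eq_norm, ← hRdef, ← hzd, infDist_eq_iInf]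
    simp only [dist_eq_norm]
  have hproj : ∀ w ∈ ω, (inner ℝ (x - z) (w - z) : ℝ) ≤ 0 :=
    (norm_eq_iInf_iff_real_inner_le_zero hωconv hz).mp hmin
  refine ⟨R⁻¹ • (x - z), ?_, ?_⟩
  · rw [mem_sphere_zero_iff_norm, norm_smul, Real.norm_eq_abs,
      abs_of_pos (inv_pos.2 hRpos), hnorm]
    field_simp
  · set θ := R⁻¹ • (x - z) with hθdef
    have hub : suppFn ω θ ≤ inner ℝ θ z := by
      refine suppFn_le hωne fun y hy => ?_
      have h1 : (inner ℝ θ y : ℝ) - inner ℝ θ z = inner ℝ θ (y - z) := by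
        rw [inner_sub_right]
      have h2 : (inner ℝ θ (y - z) : ℝ) = R⁻¹ * inner ℝ (x - z) (y - z) := by
        rw [hθdef, real_inner_smul_left]
      have h3 := hproj y hy
      nlinarith [inv_pos.2 hRpos]
    have hlb : (inner ℝ θ x : ℝ) = inner ℝ θ z + R := by
      have h1 : (inner ℝ θ x : ℝ) - inner ℝ θ z = inner ℝ θ (x - z) := by rw [inner_sub_right]
      have h2 : (inner ℝ θ (x - z) : ℝ) = R⁻¹ * inner ℝ (x - z) (x - z) := by
        rw [hθdef, real_inner_smul_left]
      have h3 : (inner ℝ (x - z) (x - z) : ℝ) = ‖x - z‖ * ‖x - z‖ :=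
        real_inner_self_eq_norm_mul_norm _
      rw [hnorm] at h3
      rw [h3] at h2
      have h5 : R⁻¹ * (R * R) = R := by field_simp
      rw [h5] at h2
      linarith
    have h4 : (inner ℝ θ x : ℝ) ≤ suppFn Ω θ := inner_le_suppFn hΩc hxΩ θ
    have h5 := hzd ▸ hxd
    linarith

lemma suppFn_lipschitz {ω : Set E} (hne : ω.Nonempty) (hc : IsCompact ω) :
    Continuous (suppFn ω) := by
  obtain ⟨R, hR⟩ := hc.isBounded.subset_closedBall 0
  have key : ∀ θ₁ θ₂ : E, suppFn ω θ₁ ≤ suppFn ω θ₂ + |R| * ‖θ₁ - θ₂‖ := by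
    intro θ₁ θ₂
    obtain ⟨y, hy, hEq⟩ := exists_suppFn_eq hne hc θ₁
    rw [hEq]
    have h1 : (inner ℝ θ₁ y : ℝ) = inner ℝ θ₂ y + inner ℝ (θ₁ - θ₂) y := by
      rw [inner_sub_left]; ring
    have h2 : (inner ℝ (θ₁ - θ₂) y : ℝ) ≤ ‖θ₁ - θ₂‖ * ‖y‖ := real_inner_le_norm _ _
    have h3 : ‖y‖ ≤ |R| := le_trans (mem_closedBall_zero_iff.mp (hR hy)) (le_abs_self R)
    have h4 := inner_le_suppFn hc hy θ₂
    nlinarith [norm_nonneg (θ₁ - θ₂)]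
  have : LipschitzWith (Real.toNNReal |R|) (suppFn ω) := by
    refine LipschitzWith.of_dist_le_mul fun θ₁ θ₂ => ?_
    rw [Real.dist_eq, Real.coe_toNNReal _ (abs_nonneg R), dist_eq_norm]
    rw [abs_sub_le_iff]
    constructor
    · linarith [key θ₁ θ₂]
    · have := key θ₂ θ₁
      rw [norm_sub_rev] at this
      linarith
  exact this.continuous

end SuppFn

lemma abs_apply_le_norm {k : ℕ} (u : EuclideanSpace ℝ (Fin k)) (i : Fin k) : |u i| ≤ ‖u‖ := by
  rw [EuclideanSpace.norm_eq]
  have h1 : |u i| = Real.sqrt (‖u i‖ ^ 2) := by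
    rw [Real.sqrt_sq_eq_abs, Real.norm_eq_abs, abs_abs]
  rw [h1]
  exact Real.sqrt_le_sqrt
    (Finset.single_le_sum (fun j _ => sq_nonneg ‖u j‖) (Finset.mem_univ i))

set_option maxHeartbeats 2000000 in
lemma cap_pos {m : ℕ} {θ₀ : EuclideanSpace ℝ (Fin (m+1))}
    (hθ₀ : ‖θ₀‖ = 1) {δ : ℝ} (hδ : 0 < δ) :
    0 < μH[(m:ℝ)] (sphere (0:EuclideanSpace ℝ (Fin (m+1))) 1 ∩ ball θ₀ δ) := by
  classical
  have horth : Orthonormal ℝ (Set.restrict {(0 : Fin (m+1))} (fun _ => θ₀)) := by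
    rw [orthonormal_iff_ite]
    intro i j
    have hij : i = j := Subtype.ext (by
      have hi := i.2; have hj := j.2
      simp only [Set.mem_singleton_iff] at hi hj
      rw [hi, hj])
    subst hij
    rw [if_pos rfl]
    show (inner ℝ θ₀ θ₀ : ℝ) = 1
    rw [real_inner_self_eq_norm_mul_norm, hθ₀]; norm_num
  obtain ⟨b, hb⟩ := horth.exists_orthonormalBasis_extension_of_card_eq
    (by simp [finrank_euclideanSpace])
  have hb0 : b 0 = θ₀ := hb 0 rfl
  obtain ⟨g, hgfun⟩ : ∃ g : EuclideanSpace ℝ (Fin (m+1)) → (Fin m → ℝ),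
      ∀ x j, g x j = b.repr x (Fin.succ j) := ⟨_, fun _ _ => rfl⟩
  have hgl : LipschitzWith 1 g := by
    refine LipschitzWith.of_dist_le_mul fun x y => ?_
    rw [NNReal.coe_one, one_mul]
    refine (dist_pi_le_iff dist_nonneg).2 fun j => ?_
    have h2 : g x j - g y j = b.repr (x - y) (Fin.succ j) := by
      rw [hgfun, hgfun, map_sub]
      rfl
    calc dist (g x j) (g y j) = |g x j - g y j| := Real.dist_eq _ _
      _ = |b.repr (x - y) (Fin.succ j)| := by rw [h2]
      _ ≤ ‖b.repr (x - y)‖ := abs_apply_le_norm _ _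
      _ = ‖x - y‖ := b.repr.norm_map _
      _ = dist x y := (dist_eq_norm _ _).symm
  obtain ⟨r, hr⟩ : ∃ r : ℝ, r = min 1 δ / 2 := ⟨_, rfl⟩
  have hr0 : 0 < r := by
    have := lt_min one_pos hδ
    rw [hr]; positivity
  have hr1 : r ≤ 1/2 := by
    have : min 1 δ ≤ 1 := min_le_left _ _
    rw [hr]; linarith
  have hrδ : r ≤ δ/2 := by
    have : min 1 δ ≤ δ := min_le_right _ _
    rw [hr]; linarith
  clear hr
  obtain ⟨D, hD⟩ : ∃ D : Set (Fin m → ℝ), D = {w | ∑ j, (w j)^2 < r^2} := ⟨_, rfl⟩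
  have hDopen : IsOpen D := by
    rw [hD]
    have : Continuous fun w : Fin m → ℝ => ∑ j, (w j)^2 := by continuity
    exact isOpen_lt this continuous_const
  have h0D : (0 : Fin m → ℝ) ∈ D := by
    rw [hD]
    simp only [Set.mem_setOf_eq, Pi.zero_apply]
    simpa using pow_pos hr0 2
  have hDsub : D ⊆ g '' (sphere (0:EuclideanSpace ℝ (Fin (m+1))) 1 ∩ ball θ₀ δ) := by
    intro w hw
    rw [hD, Set.mem_setOf_eq] at hw
    obtain ⟨t, ht⟩ : ∃ t : ℝ, t = ∑ j, (w j)^2 := ⟨_, rfl⟩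
    have hsum : t < r^2 := by rw [ht]; exact hw
    have hsum0 : 0 ≤ t := by
      rw [ht]; exact Finset.sum_nonneg fun j _ => sq_nonneg _
    have ht1 : t < 1 := by nlinarith
    obtain ⟨c, hc⟩ : ∃ c : ℝ, c = Real.sqrt (1 - t) := ⟨_, rfl⟩
    have hc0 : 0 ≤ c := hc ▸ Real.sqrt_nonneg _
    have hc2 : c^2 = 1 - t := by rw [hc]; exact Real.sq_sqrt (by linarith)
    have hc1 : c ≤ 1 := by nlinarith
    clear hc
    obtain ⟨u, hu⟩ : ∃ u : EuclideanSpace ℝ (Fin (m+1)),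
        u = (WithLp.equiv 2 _).symm (Fin.cons c w) := ⟨_, rfl⟩
    have hu0 : u 0 = c := by
      rw [hu, WithLp.equiv_symm_apply, PiLp.toLp_apply, Fin.cons_zero]
    have hus : ∀ j : Fin m, u (Fin.succ j) = w j := fun j => by
      rw [hu, WithLp.equiv_symm_apply, PiLp.toLp_apply, Fin.cons_succ]
    clear hu
    have hsum_eq : (∑ i, ‖u i‖^2) = 1 := by
      rw [Fin.sum_univ_succ, hu0]
      have hterm : ∀ j : Fin m, ‖u (Fin.succ j)‖^2 = (w j)^2 := fun j => by
        rw [hus j, Real.norm_eq_abs, sq_abs]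
      rw [Finset.sum_congr rfl fun j _ => hterm j]
      rw [Real.norm_eq_abs, sq_abs, ← ht]
      linarith [hc2]
    have hnu : ‖u‖ = 1 := by
      rw [EuclideanSpace.norm_eq, hsum_eq, Real.sqrt_one]
    obtain ⟨θ, hθdef⟩ : ∃ θ, θ = b.repr.symm u := ⟨_, rfl⟩
    have hθn : ‖θ‖ = 1 := by rw [hθdef, b.repr.symm.norm_map]; exact hnu
    have hθu : b.repr θ = u := by rw [hθdef, b.repr.apply_symm_apply]
    have hdist : dist θ θ₀ < δ := by
      have h1 : dist θ θ₀ = dist u (b.repr θ₀) := by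
        conv_lhs => rw [hθdef, ← b.repr.symm_apply_apply θ₀]
        exact b.repr.symm.dist_map _ _
      rw [h1, ← hb0, OrthonormalBasis.repr_self]
      rw [EuclideanSpace.dist_eq]
      have hterm0 : dist (u 0) (EuclideanSpace.single (0:Fin (m+1)) (1:ℝ) 0) ^ 2 = (1-c)^2 := by
        have hsingle : EuclideanSpace.single (0:Fin (m+1)) (1:ℝ) 0 = 1 := by
          simp [EuclideanSpace.single_apply]
        rw [hu0, hsingle, Real.dist_eq, ← abs_neg, neg_sub, sq_abs]
      have hterms : ∀ j : Fin m,
          dist (u (Fin.succ j)) (EuclideanSpace.single (0:Fin (m+1)) (1:ℝ) (Fin.succ j)) ^ 2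
            = (w j)^2 := fun j => by
        have hsingle : EuclideanSpace.single (0:Fin (m+1)) (1:ℝ) (Fin.succ j) = 0 := by
          simp [EuclideanSpace.single_apply, Fin.succ_ne_zero j]
        rw [hus j, hsingle, Real.dist_eq, sub_zero, sq_abs]
      have hsumlt : (∑ i, dist (u i) (EuclideanSpace.single (0:Fin (m+1)) (1:ℝ) i) ^ 2)
          < δ^2 := by
        rw [Fin.sum_univ_succ, hterm0, Finset.sum_congr rfl fun j _ => hterms j, ← ht]
        have h1c : 1 - c ≤ t := by nlinarith
        have h1c0 : 0 ≤ 1 - c := by linarith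
        have e1 : (1-c)^2 ≤ t^2 := by nlinarith
        have e2 : t^2 ≤ t := by nlinarith
        have e3 : (2:ℝ)*r^2 < δ^2 := by nlinarith
        linarith
      calc Real.sqrt (∑ i, dist (u i) (EuclideanSpace.single (0:Fin (m+1)) (1:ℝ) i) ^ 2)
          < Real.sqrt (δ^2) :=
            Real.sqrt_lt_sqrt (Finset.sum_nonneg fun i _ => sq_nonneg _) hsumlt
        _ = δ := by rw [Real.sqrt_sq hδ.le]
    have hgθ : g θ = w := by
      funext j
      rw [hgfun, hθu]
      exact hus j
    exact ⟨θ, ⟨mem_sphere_zero_iff_norm.2 hθn, mem_ball.2 hdist⟩, hgθ⟩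
  have h1 : (0:ℝ≥0∞) < volume D := hDopen.measure_pos volume ⟨0, h0D⟩
  have h2 : (μH[(m:ℝ)] : Measure (Fin m → ℝ)) D = volume D := by
    have h := hausdorffMeasure_pi_real (ι := Fin m)
    simp only [Fintype.card_fin] at h
    rw [h]
  have h3 := hgl.hausdorffMeasure_image_le
    (show (0:ℝ) ≤ (m:ℝ) by positivity)
    (sphere (0:EuclideanSpace ℝ (Fin (m+1))) 1 ∩ ball θ₀ δ)
  simp only [ENNReal.coe_one, ENNReal.one_rpow, one_mul] at h3
  calc (0:ℝ≥0∞) < volume D := h1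
    _ = μH[(m:ℝ)] D := h2.symm
    _ ≤ μH[(m:ℝ)] (g '' (sphere (0:EuclideanSpace ℝ (Fin (m+1))) 1 ∩ ball θ₀ δ)) :=
        measure_mono hDsub
    _ ≤ μH[(m:ℝ)] (sphere (0:EuclideanSpace ℝ (Fin (m+1))) 1 ∩ ball θ₀ δ) := h3

set_option maxHeartbeats 2000000 in
lemma sphere_hausdorff_lt_top (m : ℕ) :
    μH[(m:ℝ)] (sphere (0:EuclideanSpace ℝ (Fin (m+1))) 1) < ⊤ := by
  classical
  obtain ⟨K, hK⟩ : ∃ K : Set (Fin m → ℝ), K = Set.univ.pi fun _ => Set.Icc (-1:ℝ) 1 := ⟨_, rfl⟩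
  have hKc : IsCompact K := hK ▸ isCompact_univ_pi fun _ => isCompact_Icc
  have hKfin : μH[(m:ℝ)] K < ⊤ := by
    have h := hausdorffMeasure_pi_real (ι := Fin m)
    simp only [Fintype.card_fin] at h
    rw [h]
    exact hKc.measure_lt_top
  have hKmem : ∀ v : Fin m → ℝ, (∀ j, |v j| ≤ 1) → v ∈ K := by
    intro v hv
    rw [hK]
    exact fun j _ => abs_le.1 (hv j)
  obtain ⟨e, hefun⟩ : ∃ e : Fin (m+1) × Bool → (Fin m → ℝ) → (Fin (m+1) → ℝ),
      ∀ pr v, e pr v = Fin.insertNth pr.1 (if pr.2 then 1 else -1) v := ⟨_, fun _ _ => rfl⟩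
  have hel : ∀ pr, LipschitzWith 1 (e pr) := by
    intro pr
    refine LipschitzWith.of_dist_le_mul fun v w => ?_
    rw [NNReal.coe_one, one_mul]
    refine (dist_pi_le_iff dist_nonneg).2 fun i => ?_
    refine Fin.succAboveCases pr.1 ?_ ?_ i
    · rw [hefun, hefun, Fin.insertNth_apply_same, Fin.insertNth_apply_same]
      simp [dist_nonneg]
    · intro j
      rw [hefun, hefun, Fin.insertNth_apply_succAbove, Fin.insertNth_apply_succAbove]
      exact dist_le_pi_dist v w j
  obtain ⟨A, hA⟩ : ∃ A : Set (Fin (m+1) → ℝ), A = ⋃ pr : Fin (m+1) × Bool, e pr '' K :=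
    ⟨_, rfl⟩
  have hAfin : μH[(m:ℝ)] A < ⊤ := by
    rw [hA]
    refine lt_of_le_of_lt (measure_iUnion_le _) ?_
    rw [tsum_fintype]
    refine ENNReal.sum_lt_top.2 fun pr _ => ?_
    calc μH[(m:ℝ)] (e pr '' K) ≤ (1:ℝ≥0)^(m:ℝ) * μH[(m:ℝ)] K :=
          (hel pr).hausdorffMeasure_image_le (by positivity) K
      _ = μH[(m:ℝ)] K := by rw [ENNReal.coe_one, ENNReal.one_rpow, one_mul]
      _ < ⊤ := hKfin
  -- normalization map
  obtain ⟨F, hFfun⟩ : ∃ F : EuclideanSpace ℝ (Fin (m+1)) → EuclideanSpace ℝ (Fin (m+1)),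
      ∀ y, F y = ‖y‖⁻¹ • y := ⟨_, fun _ => rfl⟩
  have hFl : LipschitzOnWith 2 F {y : EuclideanSpace ℝ (Fin (m+1)) | 1 ≤ ‖y‖} := by
    rw [lipschitzOnWith_iff_dist_le_mul]
    intro y hy z hz
    simp only [Set.mem_setOf_eq] at hy hz
    have hy0 : (0:ℝ) < ‖y‖ := lt_of_lt_of_le one_pos hy
    have hz0 : (0:ℝ) < ‖z‖ := lt_of_lt_of_le one_pos hz
    have key : F y - F z = ‖y‖⁻¹ • (y - z) + (‖y‖⁻¹ - ‖z‖⁻¹) • z := by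
      rw [hFfun, hFfun, smul_sub, sub_smul]
      abel
    have h1 : ‖‖y‖⁻¹ • (y - z)‖ ≤ ‖y - z‖ := by
      rw [norm_smul, Real.norm_eq_abs, abs_of_pos (inv_pos.2 hy0)]
      have hinv : ‖y‖⁻¹ ≤ 1 := by
        rw [inv_le_one_iff₀]; right; exact hy
      nlinarith [norm_nonneg (y - z)]
    have h2 : ‖(‖y‖⁻¹ - ‖z‖⁻¹) • z‖ ≤ ‖y - z‖ := by
      rw [norm_smul, Real.norm_eq_abs]
      have e1 : ‖y‖⁻¹ - ‖z‖⁻¹ = (‖z‖ - ‖y‖) / (‖y‖ * ‖z‖) := by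
        field_simp
      rw [e1, abs_div, abs_of_pos (mul_pos hy0 hz0)]
      have e2 : |‖z‖ - ‖y‖| ≤ ‖y - z‖ := by
        rw [norm_sub_rev]
        exact abs_norm_sub_norm_le z y
      have e3 : |‖z‖ - ‖y‖| / (‖y‖ * ‖z‖) * ‖z‖ = |‖z‖ - ‖y‖| / ‖y‖ := by
        field_simp
      rw [e3]
      calc |‖z‖ - ‖y‖| / ‖y‖ ≤ |‖z‖ - ‖y‖| := div_le_self (abs_nonneg _) hy
        _ ≤ ‖y - z‖ := e2
    calc dist (F y) (F z) = ‖F y - F z‖ := dist_eq_norm _ _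
      _ = ‖‖y‖⁻¹ • (y - z) + (‖y‖⁻¹ - ‖z‖⁻¹) • z‖ := by rw [key]
      _ ≤ ‖‖y‖⁻¹ • (y - z)‖ + ‖(‖y‖⁻¹ - ‖z‖⁻¹) • z‖ := norm_add_le _ _
      _ ≤ ‖y - z‖ + ‖y - z‖ := add_le_add h1 h2
      _ = 2 * ‖y - z‖ := by ring
      _ = (2:ℝ≥0) * dist y z := by rw [dist_eq_norm]; norm_num
  obtain ⟨sym, hsymfun⟩ : ∃ sym : (Fin (m+1) → ℝ) → EuclideanSpace ℝ (Fin (m+1)),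
      ∀ x, sym x = (WithLp.equiv 2 _).symm x := ⟨_, fun _ => rfl⟩
  obtain ⟨C, hsyml⟩ : ∃ C : ℝ≥0, LipschitzWith C sym := by
    have heq : sym = ⇑(WithLp.equiv 2 ((Fin (m+1)) → ℝ)).symm := funext hsymfun
    rw [heq]
    exact ⟨_, PiLp.lipschitzWith_toLp 2 (fun _ : Fin (m+1) => ℝ)⟩
  obtain ⟨T, hT⟩ : ∃ T : Set (Fin (m+1) → ℝ), T = {x | 1 ≤ ‖sym x‖} := ⟨_, rfl⟩
  have hcomp : LipschitzOnWith (2 * C) (F ∘ sym) T := by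
    refine hFl.comp hsyml.lipschitzOnWith fun x hx => ?_
    rw [hT] at hx
    exact hx
  have hsub : sphere (0:EuclideanSpace ℝ (Fin (m+1))) 1 ⊆ (F ∘ sym) '' (A ∩ T) := by
    intro θ hθ
    rw [mem_sphere_zero_iff_norm] at hθ
    obtain ⟨x, hx⟩ : ∃ x : Fin (m+1) → ℝ, x = WithLp.equiv 2 _ θ := ⟨_, rfl⟩
    have hsymx : sym x = θ := by
      rw [hsymfun, hx]
      exact (WithLp.equiv 2 _).symm_apply_apply θ
    have hx0 : x ≠ 0 := by
      intro h
      have hθ0 : θ = 0 := by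
        rw [← hsymx, h, hsymfun]
        simp
      rw [hθ0, norm_zero] at hθ
      norm_num at hθ
    have htn0 : (0:ℝ) < ‖x‖ := norm_pos_iff.2 hx0
    have hxi : ∀ i, x i = θ i := fun i => by rw [hx]; rfl
    have htn1 : ‖x‖ ≤ 1 := by
      refine (pi_norm_le_iff_of_nonneg zero_le_one).2 fun i => ?_
      rw [Real.norm_eq_abs, hxi i]
      calc |θ i| ≤ ‖θ‖ := abs_apply_le_norm θ i
        _ = 1 := hθ
    obtain ⟨u, hu⟩ : ∃ u : Fin (m+1) → ℝ, u = ‖x‖⁻¹ • x := ⟨_, rfl⟩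
    have hui' : ∀ i, |u i| ≤ 1 := by
      intro i
      rw [hu]
      simp only [Pi.smul_apply, smul_eq_mul, abs_mul, abs_of_pos (inv_pos.2 htn0)]
      have hb : |x i| ≤ ‖x‖ := by
        rw [← Real.norm_eq_abs]
        exact norm_le_pi_norm x i
      calc ‖x‖⁻¹ * |x i| ≤ ‖x‖⁻¹ * ‖x‖ :=
            mul_le_mul_of_nonneg_left hb (le_of_lt (inv_pos.2 htn0))
        _ = 1 := inv_mul_cancel₀ (ne_of_gt htn0)
    have hnu : ‖u‖ = 1 := by
      rw [hu, norm_smul, Real.norm_eq_abs, abs_of_pos (inv_pos.2 htn0),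
        inv_mul_cancel₀ (ne_of_gt htn0)]
    have hex : ∃ i, |u i| = 1 := by
      obtain ⟨i, _, hi⟩ := Finset.exists_mem_eq_sup (Finset.univ : Finset (Fin (m+1)))
        Finset.univ_nonempty (fun i => ‖u i‖₊)
      refine ⟨i, ?_⟩
      have h2 : ‖u‖₊ = ‖u i‖₊ := by rw [Pi.nnnorm_def, hi]
      have h3 : ‖u‖ = ‖u i‖ := by
        rw [← coe_nnnorm, ← coe_nnnorm, h2]
      rw [← Real.norm_eq_abs, ← h3, hnu]
    obtain ⟨i, hi⟩ := hex
    have hcases : u i = 1 ∨ u i = -1 := (abs_eq (by norm_num : (0:ℝ) ≤ 1)).1 hi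
    have huA : u ∈ A := by
      rw [hA]
      rcases hcases with h | h
      · refine Set.mem_iUnion.2 ⟨(i, true),
          ⟨Fin.removeNth i u, hKmem _ fun j => ?_, ?_⟩⟩
        · simpa [Fin.removeNth] using hui' (i.succAbove j)
        · rw [hefun]
          have hval : (if (true : Bool) = true then (1:ℝ) else -1) = u i := by rw [if_pos rfl, h]
          rw [hval]
          exact Fin.insertNth_self_removeNth i u
      · refine Set.mem_iUnion.2 ⟨(i, false),
          ⟨Fin.removeNth i u, hKmem _ fun j => ?_, ?_⟩⟩
        · simpa [Fin.removeNth] using hui' (i.succAbove j)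
        · rw [hefun]
          have hval : (if (false : Bool) = true then (1:ℝ) else -1) = u i := by rw [if_neg Bool.false_ne_true, h]
          rw [hval]
          exact Fin.insertNth_self_removeNth i u
    have hsymu : sym u = ‖x‖⁻¹ • θ := by
      rw [hu, hsymfun, show (WithLp.equiv 2 _).symm (‖x‖⁻¹ • x) = ‖x‖⁻¹ • (WithLp.equiv 2 _).symm x from rfl, ← hsymfun, hsymx]
    have hnsymu : ‖sym u‖ = ‖x‖⁻¹ := by
      rw [hsymu, norm_smul, Real.norm_eq_abs, abs_of_pos (inv_pos.2 htn0), hθ, mul_one]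
    have huT : u ∈ T := by
      rw [hT]
      show 1 ≤ ‖sym u‖
      rw [hnsymu]
      exact (one_le_inv₀ htn0).2 htn1
    refine ⟨u, ⟨huA, huT⟩, ?_⟩
    show F (sym u) = θ
    rw [hFfun, hnsymu, hsymu, inv_inv, smul_smul, mul_inv_cancel₀ (ne_of_gt htn0), one_smul]
  calc μH[(m:ℝ)] (sphere (0:EuclideanSpace ℝ (Fin (m+1))) 1)
      ≤ μH[(m:ℝ)] ((F ∘ sym) '' (A ∩ T)) := measure_mono hsub
    _ ≤ ((2*C : ℝ≥0) : ℝ≥0∞)^(m:ℝ) * μH[(m:ℝ)] (A ∩ T) :=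
        (hcomp.mono Set.inter_subset_right).hausdorffMeasure_image_le (by positivity)
    _ ≤ ((2*C : ℝ≥0) : ℝ≥0∞)^(m:ℝ) * μH[(m:ℝ)] A :=
        mul_le_mul_right (measure_mono Set.inter_subset_left) _
    _ < ⊤ := ENNReal.mul_lt_top
        (ENNReal.rpow_lt_top_of_nonneg (by positivity) ENNReal.coe_ne_top) hAfin

lemma integrableOn_sphere {m : ℕ} {G : EuclideanSpace ℝ (Fin (m+1)) → ℝ} (hG : Continuous G) :
    IntegrableOn G (sphere (0:EuclideanSpace ℝ (Fin (m+1))) 1) μH[(m:ℝ)] := by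
  obtain ⟨C, hC⟩ :=
    (isCompact_sphere (0:EuclideanSpace ℝ (Fin (m+1))) 1).exists_bound_of_continuousOn
      hG.continuousOn
  refine Measure.integrableOn_of_bounded (M := C) (ne_of_lt (sphere_hausdorff_lt_top m))
    hG.aestronglyMeasurable ?_
  exact (ae_restrict_iff' isClosed_sphere.measurableSet).2 (Filter.Eventually.of_forall hC)

/-- If `p_k → ∞` and `ω_k → ω` in the Hausdorff distance (all sets being nonempty compact
convex subsets of the convex body `Ω`), then `J_{p_k}(ω_k) → d^H(ω, Ω)`. -/
theorem Jp_tendsto_hausdorffDist {n : ℕ} (Ω : Set (EuclideanSpace ℝ (Fin n)))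
    (hΩcomp : IsCompact Ω) (hΩconv : Convex ℝ Ω) (hΩint : (interior Ω).Nonempty)
    (p : ℕ → ℝ) (hp : ∀ k, 1 ≤ p k) (hptop : Tendsto p atTop atTop)
    (ω : ℕ → Set (EuclideanSpace ℝ (Fin n)))
    (hωne : ∀ k, (ω k).Nonempty) (hωcomp : ∀ k, IsCompact (ω k))
    (hωconv : ∀ k, Convex ℝ (ω k)) (hωsub : ∀ k, ω k ⊆ Ω)
    (ωlim : Set (EuclideanSpace ℝ (Fin n)))
    (hlimne : ωlim.Nonempty) (hlimcomp : IsCompact ωlim) (hlimconv : Convex ℝ ωlim)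
    (hlimsub : ωlim ⊆ Ω)
    (hconv : Tendsto (fun k => hausdorffDist (ω k) ωlim) atTop (𝓝 0)) :
    Tendsto (fun k => Jp Ω (ω k) (p k)) atTop (𝓝 (hausdorffDist ωlim Ω)) := by
  cases n with
  | zero =>
    have hzero : ∀ x : EuclideanSpace ℝ (Fin 0), x = 0 := fun x => PiLp.ext fun i => i.elim0
    have hS : sphere (0 : EuclideanSpace ℝ (Fin 0)) 1 = ∅ := by
      ext x
      simp only [mem_sphere_zero_iff_norm, Set.mem_empty_iff_false, iff_false]
      rw [hzero x, norm_zero]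
      norm_num
    have hJ : ∀ k, Jp Ω (ω k) (p k) = 0 := by
      intro k
      have hpk0 : p k ≠ 0 := ne_of_gt (lt_of_lt_of_le one_pos (hp k))
      simp only [Jp, hS, Measure.restrict_empty, integral_zero_measure]
      exact Real.zero_rpow (one_div_ne_zero hpk0)
    have hH : hausdorffDist ωlim Ω = 0 := by
      refine le_antisymm ?_ hausdorffDist_nonneg
      refine hausdorffDist_le_of_mem_dist le_rfl ?_ ?_
      · intro x hx
        exact ⟨x, hlimsub hx, by simp⟩
      · intro y hy
        obtain ⟨x, hx⟩ := hlimne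
        refine ⟨x, hx, ?_⟩
        rw [hzero y, hzero x]
        simp
    rw [hH]
    have heq : (fun k => Jp Ω (ω k) (p k)) = fun _ => (0:ℝ) := funext hJ
    rw [heq]
    exact tendsto_const_nhds
  | succ m =>
    have hcast : ((m+1 : ℕ) : ℝ) - 1 = (m:ℝ) := by push_cast; ring
    have hn : Ω.Nonempty := hΩint.mono interior_subset
    have hp0 : ∀ k, 0 < p k := fun k => lt_of_lt_of_le one_pos (hp k)
    have hfin : ∀ (A B : Set (EuclideanSpace ℝ (Fin (m+1)))), A.Nonempty → B.Nonempty →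
        IsCompact A → IsCompact B → EMetric.hausdorffEdist A B ≠ ⊤ := fun A B a b c d =>
      hausdorffEdist_ne_top_of_nonempty_of_bounded a b c.isBounded d.isBounded
    -- convergence of Hausdorff distances
    have hMk : Tendsto (fun k => hausdorffDist (ω k) Ω) atTop (𝓝 (hausdorffDist ωlim Ω)) := by
      have hdiff : ∀ k, ‖hausdorffDist (ω k) Ω - hausdorffDist ωlim Ω‖
          ≤ hausdorffDist (ω k) ωlim := by
        intro k
        rw [Real.norm_eq_abs, abs_sub_le_iff]
        constructor
        · have h1 := hausdorffDist_triangle (hfin _ _ (hωne k) hlimne (hωcomp k) hlimcomp)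
            (t := ωlim) (u := Ω)
          linarith
        · have h2 := hausdorffDist_triangle (hfin _ _ hlimne (hωne k) hlimcomp (hωcomp k))
            (t := ω k) (u := Ω)
          rw [(hausdorffDist_comm : hausdorffDist ωlim (ω k) = _)] at h2
          linarith
      have h0 : Tendsto (fun k => hausdorffDist (ω k) Ω - hausdorffDist ωlim Ω) atTop (𝓝 0) :=
        squeeze_zero_norm hdiff hconv
      have h1 := h0.add_const (hausdorffDist ωlim Ω)
      simp only [sub_add_cancel, zero_add] at h1
      exact h1
    -- measure facts
    have hSmeas : MeasurableSet (sphere (0:EuclideanSpace ℝ (Fin (m+1))) 1) :=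
      isClosed_sphere.measurableSet
    have hμS_ne_top : μH[(m:ℝ)] (sphere (0:EuclideanSpace ℝ (Fin (m+1))) 1) ≠ ⊤ :=
      ne_of_lt (sphere_hausdorff_lt_top m)
    have hθe : ‖(EuclideanSpace.single (0 : Fin (m+1)) (1:ℝ))‖ = 1 := by
      rw [EuclideanSpace.norm_single]
      norm_num
    have hμS_pos : 0 < μH[(m:ℝ)] (sphere (0:EuclideanSpace ℝ (Fin (m+1))) 1) :=
      lt_of_lt_of_le (cap_pos hθe (by norm_num : (0:ℝ) < 3))
        (measure_mono Set.inter_subset_left)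
    have hσS_pos : 0 < (μH[(m:ℝ)] (sphere (0:EuclideanSpace ℝ (Fin (m+1))) 1)).toReal :=
      ENNReal.toReal_pos (ne_of_gt hμS_pos) hμS_ne_top
    -- continuity and integrability
    have hContΩ : Continuous (suppFn Ω) := suppFn_lipschitz hn hΩcomp
    have hfkcont : ∀ k, Continuous fun θ => |suppFn Ω θ - suppFn (ω k) θ| ^ (p k) := fun k =>
      ((hContΩ.sub (suppFn_lipschitz (hωne k) (hωcomp k))).abs).rpow_const
        fun x => Or.inr (le_of_lt (hp0 k))
    have hInt : ∀ k, IntegrableOn (fun θ => |suppFn Ω θ - suppFn (ω k) θ| ^ (p k))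
        (sphere (0:EuclideanSpace ℝ (Fin (m+1))) 1) μH[(m:ℝ)] := fun k =>
      integrableOn_sphere (hfkcont k)
    have hIntNonneg : ∀ k, 0 ≤ ∫ θ in sphere (0:EuclideanSpace ℝ (Fin (m+1))) 1,
        |suppFn Ω θ - suppFn (ω k) θ| ^ (p k) ∂μH[(m:ℝ)] := fun k =>
      setIntegral_nonneg hSmeas fun θ _ => Real.rpow_nonneg (abs_nonneg _) _
    -- upper bound
    have hub : ∀ k, (∫ θ in sphere (0:EuclideanSpace ℝ (Fin (m+1))) 1,
        |suppFn Ω θ - suppFn (ω k) θ| ^ (p k) ∂μH[(m:ℝ)]) ^ (1 / p k)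
        ≤ hausdorffDist (ω k) Ω
          * ((μH[(m:ℝ)] (sphere (0:EuclideanSpace ℝ (Fin (m+1))) 1)).toReal) ^ (1 / p k) := by
      intro k
      have hMknn : (0:ℝ) ≤ hausdorffDist (ω k) Ω := hausdorffDist_nonneg
      have hptw : ∀ θ ∈ sphere (0:EuclideanSpace ℝ (Fin (m+1))) 1,
          |suppFn Ω θ - suppFn (ω k) θ| ^ (p k) ≤ (hausdorffDist (ω k) Ω) ^ (p k) := by
        intro θ hθ
        have h1 : suppFn Ω θ ≤ suppFn (ω k) θ + hausdorffDist (ω k) Ω := by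
          have h := suppFn_le_add_hausdorffDist hn hΩcomp (hωne k) (hωcomp k)
            (mem_sphere_zero_iff_norm.1 hθ)
          rwa [hausdorffDist_comm] at h
        have h2 : 0 ≤ suppFn Ω θ - suppFn (ω k) θ :=
          sub_nonneg.2 (suppFn_mono (hωne k) (hωsub k) hΩcomp θ)
        rw [abs_of_nonneg h2]
        exact Real.rpow_le_rpow h2 (by linarith) (le_of_lt (hp0 k))
      have hI : (∫ θ in sphere (0:EuclideanSpace ℝ (Fin (m+1))) 1,
          |suppFn Ω θ - suppFn (ω k) θ| ^ (p k) ∂μH[(m:ℝ)])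
          ≤ ∫ _θ in sphere (0:EuclideanSpace ℝ (Fin (m+1))) 1,
            (hausdorffDist (ω k) Ω) ^ (p k) ∂μH[(m:ℝ)] :=
        setIntegral_mono_on (hInt k)
          (integrableOn_const hμS_ne_top) hSmeas hptw
      have hIconst : (∫ _θ in sphere (0:EuclideanSpace ℝ (Fin (m+1))) 1,
          (hausdorffDist (ω k) Ω) ^ (p k) ∂μH[(m:ℝ)])
          = (μH[(m:ℝ)] (sphere (0:EuclideanSpace ℝ (Fin (m+1))) 1)).toReal
            * (hausdorffDist (ω k) Ω) ^ (p k) := by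
        rw [setIntegral_const, smul_eq_mul, measureReal_def]
      have hstep := Real.rpow_le_rpow (hIntNonneg k) (le_trans hI (le_of_eq hIconst))
        (le_of_lt (one_div_pos.2 (hp0 k)))
      refine le_trans hstep (le_of_eq ?_)
      rw [Real.mul_rpow ENNReal.toReal_nonneg (Real.rpow_nonneg hMknn _),
        ← Real.rpow_mul hMknn, mul_one_div_cancel (ne_of_gt (hp0 k)), Real.rpow_one]
      ring
    -- exponent limits
    have hinvp : Tendsto (fun k => 1 / p k) atTop (𝓝 0) := by
      simp only [one_div]
      exact tendsto_inv_atTop_zero.comp hptop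
    have hexp : ∀ σ : ℝ, 0 < σ → Tendsto (fun k => σ ^ (1 / p k)) atTop (𝓝 1) := by
      intro σ hσ
      have hc : ContinuousAt (fun t : ℝ => σ ^ t) 0 :=
        Real.continuousAt_const_rpow (ne_of_gt hσ)
      have h := hc.tendsto.comp hinvp
      rw [Real.rpow_zero] at h
      exact h
    have hσS_exp := hexp _ hσS_pos
    -- main
    simp only [Jp, hcast]
    rw [tendsto_order]
    constructor
    · intro a ha
      by_cases ha0 : a < 0
      · refine Filter.Eventually.of_forall fun k => lt_of_lt_of_le ha0 ?_
        exact Real.rpow_nonneg (hIntNonneg k) _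
      push_neg at ha0
      have hεpos : 0 < (hausdorffDist ωlim Ω - a)/4 := by linarith
      obtain ⟨θ₀, hθ₀S, hθ₀gt⟩ := exists_theta_gt hΩcomp hlimne hlimcomp hlimconv hlimsub
        (show hausdorffDist ωlim Ω - (hausdorffDist ωlim Ω - a)/4 < hausdorffDist ωlim Ω
          by linarith) (Nat.succ_pos m)
      have hflimc : Continuous (fun θ => suppFn Ω θ - suppFn ωlim θ) :=
        hContΩ.sub (suppFn_lipschitz hlimne hlimcomp)
      have hVopen : IsOpen {θ : EuclideanSpace ℝ (Fin (m+1)) |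
          hausdorffDist ωlim Ω - 2*((hausdorffDist ωlim Ω - a)/4)
            < suppFn Ω θ - suppFn ωlim θ} :=
        isOpen_lt continuous_const hflimc
      have hθ₀V : θ₀ ∈ {θ : EuclideanSpace ℝ (Fin (m+1)) |
          hausdorffDist ωlim Ω - 2*((hausdorffDist ωlim Ω - a)/4)
            < suppFn Ω θ - suppFn ωlim θ} := by
        simp only [Set.mem_setOf_eq]
        linarith
      obtain ⟨δ, hδ0, hδball⟩ := Metric.isOpen_iff.1 hVopen θ₀ hθ₀V
      have hUmeas : MeasurableSet (sphere (0:EuclideanSpace ℝ (Fin (m+1))) 1 ∩ ball θ₀ δ) :=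
        hSmeas.inter measurableSet_ball
      have hμU_pos := cap_pos (mem_sphere_zero_iff_norm.1 hθ₀S) hδ0
      have hμU_lt_top : μH[(m:ℝ)] (sphere (0:EuclideanSpace ℝ (Fin (m+1))) 1 ∩ ball θ₀ δ) < ⊤ :=
        lt_of_le_of_lt (measure_mono Set.inter_subset_left) (sphere_hausdorff_lt_top m)
      have hσU_pos : 0 < (μH[(m:ℝ)]
          (sphere (0:EuclideanSpace ℝ (Fin (m+1))) 1 ∩ ball θ₀ δ)).toReal :=
        ENNReal.toReal_pos (ne_of_gt hμU_pos) (ne_of_lt hμU_lt_top)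
      have hev1 : ∀ᶠ k in atTop, hausdorffDist (ω k) ωlim < (hausdorffDist ωlim Ω - a)/4 :=
        hconv.eventually_lt_const hεpos
      have hev2 : ∀ᶠ k in atTop, a < (a + (hausdorffDist ωlim Ω - a)/4)
          * ((μH[(m:ℝ)] (sphere (0:EuclideanSpace ℝ (Fin (m+1))) 1 ∩ ball θ₀ δ)).toReal)
            ^ (1 / p k) := by
        have h := (tendsto_const_nhds (x := (a + (hausdorffDist ωlim Ω - a)/4))).mul
          (hexp _ hσU_pos)
        rw [mul_one] at h
        exact h.eventually_const_lt (by linarith)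
      filter_upwards [hev1, hev2] with k hk1 hk2
      have hc_pos : 0 < a + (hausdorffDist ωlim Ω - a)/4 := by linarith
      have hptw : ∀ θ ∈ sphere (0:EuclideanSpace ℝ (Fin (m+1))) 1 ∩ ball θ₀ δ,
          (a + (hausdorffDist ωlim Ω - a)/4) ^ (p k)
            ≤ |suppFn Ω θ - suppFn (ω k) θ| ^ (p k) := by
        rintro θ ⟨hθS, hθB⟩
        have hflim_gt := hδball hθB
        simp only [Set.mem_setOf_eq] at hflim_gt
        have hlip : suppFn (ω k) θ ≤ suppFn ωlim θ + hausdorffDist (ω k) ωlim :=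
          suppFn_le_add_hausdorffDist (hωne k) (hωcomp k) hlimne hlimcomp
            (mem_sphere_zero_iff_norm.1 hθS)
        have hfk_ge : a + (hausdorffDist ωlim Ω - a)/4 ≤ suppFn Ω θ - suppFn (ω k) θ := by
          linarith
        rw [abs_of_nonneg (le_trans (le_of_lt hc_pos) hfk_ge)]
        exact Real.rpow_le_rpow (le_of_lt hc_pos) hfk_ge (le_of_lt (hp0 k))
      have hIU : (∫ _θ in sphere (0:EuclideanSpace ℝ (Fin (m+1))) 1 ∩ ball θ₀ δ,
          (a + (hausdorffDist ωlim Ω - a)/4) ^ (p k) ∂μH[(m:ℝ)])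
          ≤ ∫ θ in sphere (0:EuclideanSpace ℝ (Fin (m+1))) 1 ∩ ball θ₀ δ,
            |suppFn Ω θ - suppFn (ω k) θ| ^ (p k) ∂μH[(m:ℝ)] :=
        setIntegral_mono_on (integrableOn_const hμU_lt_top.ne)
          ((hInt k).mono_set Set.inter_subset_left) hUmeas hptw
      have hIS : (∫ θ in sphere (0:EuclideanSpace ℝ (Fin (m+1))) 1 ∩ ball θ₀ δ,
          |suppFn Ω θ - suppFn (ω k) θ| ^ (p k) ∂μH[(m:ℝ)])
          ≤ ∫ θ in sphere (0:EuclideanSpace ℝ (Fin (m+1))) 1,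
            |suppFn Ω θ - suppFn (ω k) θ| ^ (p k) ∂μH[(m:ℝ)] :=
        setIntegral_mono_set (hInt k)
          (Filter.Eventually.of_forall fun θ => Real.rpow_nonneg (abs_nonneg _) _)
          (HasSubset.Subset.eventuallyLE Set.inter_subset_left)
      have hIconst : (∫ _θ in sphere (0:EuclideanSpace ℝ (Fin (m+1))) 1 ∩ ball θ₀ δ,
          (a + (hausdorffDist ωlim Ω - a)/4) ^ (p k) ∂μH[(m:ℝ)])
          = (μH[(m:ℝ)] (sphere (0:EuclideanSpace ℝ (Fin (m+1))) 1 ∩ ball θ₀ δ)).toReal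
            * (a + (hausdorffDist ωlim Ω - a)/4) ^ (p k) := by
        rw [setIntegral_const, smul_eq_mul, measureReal_def]
      have h1 : (μH[(m:ℝ)] (sphere (0:EuclideanSpace ℝ (Fin (m+1))) 1 ∩ ball θ₀ δ)).toReal
          * (a + (hausdorffDist ωlim Ω - a)/4) ^ (p k)
          ≤ ∫ θ in sphere (0:EuclideanSpace ℝ (Fin (m+1))) 1,
            |suppFn Ω θ - suppFn (ω k) θ| ^ (p k) ∂μH[(m:ℝ)] := by
        rw [← hIconst]
        exact le_trans hIU hIS
      have h2 := Real.rpow_le_rpow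
        (mul_nonneg ENNReal.toReal_nonneg (Real.rpow_nonneg (le_of_lt hc_pos) _)) h1
        (le_of_lt (one_div_pos.2 (hp0 k)))
      have h3 : (a + (hausdorffDist ωlim Ω - a)/4)
          * ((μH[(m:ℝ)] (sphere (0:EuclideanSpace ℝ (Fin (m+1))) 1 ∩ ball θ₀ δ)).toReal)
            ^ (1 / p k)
          = ((μH[(m:ℝ)] (sphere (0:EuclideanSpace ℝ (Fin (m+1))) 1 ∩ ball θ₀ δ)).toReal
            * (a + (hausdorffDist ωlim Ω - a)/4) ^ (p k)) ^ (1 / p k) := by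
        rw [Real.mul_rpow ENNReal.toReal_nonneg (Real.rpow_nonneg (le_of_lt hc_pos) _),
          ← Real.rpow_mul (le_of_lt hc_pos), mul_one_div_cancel (ne_of_gt (hp0 k)),
          Real.rpow_one]
        ring
      calc a < (a + (hausdorffDist ωlim Ω - a)/4)
            * ((μH[(m:ℝ)] (sphere (0:EuclideanSpace ℝ (Fin (m+1))) 1 ∩ ball θ₀ δ)).toReal)
              ^ (1 / p k) := hk2
        _ = _ := h3
        _ ≤ _ := h2
    · intro b hb
      have hevub : ∀ᶠ k in atTop, hausdorffDist (ω k) Ω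
          * ((μH[(m:ℝ)] (sphere (0:EuclideanSpace ℝ (Fin (m+1))) 1)).toReal) ^ (1 / p k) < b := by
        have h := hMk.mul hσS_exp
        rw [mul_one] at h
        exact h.eventually_lt_const hb
      filter_upwards [hevub] with k hk
      exact lt_of_le_of_lt (hub k) hk
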